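/- For every prime power q ≥ 5, the minimum distance of the toric code C_{P_6^(3)} over 𝔽_q equals (q-1)² − 3(q-1), where P_6^(3) = conv{(0,0),(3,0),(1,1),(0,1)}. -/

import Mathlib

/-- Embed a lattice point of `ℤ²` into the real plane. -/
def toRealPt (p : ℤ × ℤ) : ℝ × ℝ := ((p.1 : ℝ), (p.2 : ℝ))

/-- The lattice points of the (possibly degenerate) convex lattice polygon spanned by a
finite set `V` of points of `ℤ²`, i.e. the points of `ℤ²` lying in the convex hull of `V`. -/
def latticePts (V : Finset (ℤ × ℤ)) : Set (ℤ × ℤ) :=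
  {p | toRealPt p ∈ convexHull ℝ (toRealPt '' (V : Set (ℤ × ℤ)))}

/-- The integer affine map `T(x) = Mx + v` on `ℤ²`. -/
def affMap (M : Matrix (Fin 2) (Fin 2) ℤ) (v : ℤ × ℤ) (p : ℤ × ℤ) : ℤ × ℤ :=
  (M 0 0 * p.1 + M 0 1 * p.2 + v.1, M 1 0 * p.1 + M 1 1 * p.2 + v.2)

/-- Two subsets of `ℤ²` are lattice equivalent if some affine map `T(x) = Mx + v`,
with `M ∈ GL(2,ℤ)` and `v ∈ ℤ²`, maps the first bijectively onto the second. -/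
def LatticeEquiv (S S' : Set (ℤ × ℤ)) : Prop :=
  ∃ (M : Matrix (Fin 2) (Fin 2) ℤ) (v : ℤ × ℤ),
    IsUnit M.det ∧ Set.BijOn (affMap M v) S S'

/-- Evaluation of the Laurent monomial `x^{m₁} y^{m₂}` at a point of the torus `(F*)²`. -/
def evalMonomial {F : Type*} [Field F] (m : ℤ × ℤ) (t : Fˣ × Fˣ) : F :=
  ((t.1 ^ m.1 : Fˣ) : F) * ((t.2 ^ m.2 : Fˣ) : F)

/-- The toric code over `F` associated to a set `S ⊆ ℤ²` of exponent vectors: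
the span of the evaluation vectors of the monomials `x^{m₁} y^{m₂}`, `m ∈ S`. -/
def toricCode (F : Type*) [Field F] (S : Set (ℤ × ℤ)) :
    Submodule F ((Fˣ × Fˣ) → F) :=
  Submodule.span F ((fun m => evalMonomial m) '' S)

/-- The Hamming weight of a word: the number of nonzero coordinates. -/
noncomputable def hammingWt {X F : Type*} [Zero F] (c : X → F) : ℕ :=
  Set.ncard {x | c x ≠ 0}

/-- The minimum distance of a linear code: the least Hamming weight of a nonzero codeword. -/
noncomputable def minDist {F X : Type*} [Field F] (C : Submodule F (X → F)) : ℕ :=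
  sInf {w | ∃ c ∈ C, c ≠ 0 ∧ hammingWt c = w}

/-- Monomial equivalence of linear codes inside `F^X`. -/
def MonomiallyEquiv {F X : Type*} [Field F] (C₁ C₂ : Submodule F (X → F)) : Prop :=
  ∃ (π : Equiv.Perm X) (d : X → Fˣ),
    (C₂ : Set (X → F)) = (fun c x => (d x : F) * c (π x)) '' (C₁ : Set (X → F))

/-- The vertex sets of the fourteen polygons `P₆⁽ⁱ⁾`, `i = 1, …, 14`. -/
def P6 : ℕ → Finset (ℤ × ℤ)
  | 1 => {(0,0),(5,0)}
  | 2 => {(0,0),(4,0),(0,1)}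
  | 3 => {(0,0),(3,0),(1,1),(0,1)}
  | 4 => {(0,-1),(3,0),(0,1)}
  | 5 => {(-1,-1),(3,0),(0,1)}
  | 6 => {(0,0),(1,0),(3,3),(0,1)}
  | 7 => {(0,0),(0,1),(3,0),(3,-1)}
  | 8 => {(-1,0),(0,1),(2,0),(0,-1)}
  | 9 => {(0,-1),(2,0),(1,1),(0,1)}
  | 10 => {(0,-1),(2,0),(-1,2)}
  | 11 => {(-1,-1),(1,0),(1,1),(0,2)}
  | 12 => {(-1,0),(0,-1),(1,0),(1,1),(0,1)}
  | 13 => {(0,0),(2,0),(0,2)}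
  | 14 => {(0,0),(2,0),(2,1),(0,1)}
  | _ => ∅

/-! ### Auxiliary lemmas -/

section Aux

open Finset Polynomial

lemma convexK : Convex ℝ {p : ℝ × ℝ | 0 ≤ p.2 ∧ p.2 ≤ 1 ∧ 0 ≤ p.1 ∧ p.1 + 2*p.2 ≤ 3} := by
  intro x hx y hy a b ha hb hab
  obtain ⟨h1, h2, h3, h4⟩ := hx
  obtain ⟨k1, k2, k3, k4⟩ := hy
  simp only [Set.mem_setOf_eq, Prod.fst_add, Prod.snd_add, Prod.smul_fst, Prod.smul_snd,
    smul_eq_mul]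
  refine ⟨by nlinarith, by nlinarith, by nlinarith, by nlinarith⟩

lemma mem_hull_13 {x y z : ℝ × ℝ} {s : Set (ℝ × ℝ)} (hx : x ∈ convexHull ℝ s)
    (hy : y ∈ convexHull ℝ s) (h : (2/3 : ℝ) • x + (1/3 : ℝ) • y = z) :
    z ∈ convexHull ℝ s := by
  have := (convex_convexHull ℝ s) hx hy (by norm_num : (0:ℝ) ≤ 2/3)
    (by norm_num : (0:ℝ) ≤ 1/3) (by norm_num)
  rwa [h] at this

lemma latticePts_P6_3 :
    latticePts (P6 3) = ({(0,0),(1,0),(2,0),(3,0),(0,1),(1,1)} : Set (ℤ × ℤ)) := by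
  have hV : (toRealPt '' ((P6 3 : Finset (ℤ×ℤ)) : Set (ℤ × ℤ)))
      = ({((0:ℝ),(0:ℝ)), (3,0), (1,1), (0,1)} : Set (ℝ × ℝ)) := by
    show toRealPt '' (({(0,0),(3,0),(1,1),(0,1)} : Finset (ℤ×ℤ)) : Set (ℤ×ℤ)) = _
    simp [Set.image_insert_eq, toRealPt]
  ext ⟨m, n⟩
  simp only [latticePts, Set.mem_setOf_eq, hV]
  constructor
  · intro h
    have hsub : convexHull ℝ ({((0:ℝ),(0:ℝ)), (3,0), (1,1), (0,1)} : Set (ℝ × ℝ)) ⊆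
        {p : ℝ × ℝ | 0 ≤ p.2 ∧ p.2 ≤ 1 ∧ 0 ≤ p.1 ∧ p.1 + 2*p.2 ≤ 3} := by
      apply convexHull_min _ convexK
      intro p hp
      simp only [Set.mem_insert_iff, Set.mem_singleton_iff] at hp
      rcases hp with rfl | rfl | rfl | rfl <;> norm_num
    have := hsub h
    simp only [Set.mem_setOf_eq, toRealPt] at this
    obtain ⟨h1, h2, h3, h4⟩ := this
    have e1 : (0:ℤ) ≤ n := by exact_mod_cast h1
    have e2 : n ≤ 1 := by exact_mod_cast h2
    have e3 : (0:ℤ) ≤ m := by exact_mod_cast h3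
    have e4 : m + 2*n ≤ 3 := by exact_mod_cast h4
    simp only [Set.mem_insert_iff, Set.mem_singleton_iff, Prod.mk.injEq]
    omega
  · intro h
    have h00 : ((0:ℝ),(0:ℝ)) ∈ convexHull ℝ ({((0:ℝ),(0:ℝ)), (3,0), (1,1), (0,1)} : Set (ℝ×ℝ)) :=
      subset_convexHull ℝ _ (by simp)
    have h30 : ((3:ℝ),(0:ℝ)) ∈ convexHull ℝ ({((0:ℝ),(0:ℝ)), (3,0), (1,1), (0,1)} : Set (ℝ×ℝ)) :=
      subset_convexHull ℝ _ (by simp)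
    have h11 : ((1:ℝ),(1:ℝ)) ∈ convexHull ℝ ({((0:ℝ),(0:ℝ)), (3,0), (1,1), (0,1)} : Set (ℝ×ℝ)) :=
      subset_convexHull ℝ _ (by simp)
    have h01 : ((0:ℝ),(1:ℝ)) ∈ convexHull ℝ ({((0:ℝ),(0:ℝ)), (3,0), (1,1), (0,1)} : Set (ℝ×ℝ)) :=
      subset_convexHull ℝ _ (by simp)
    have h10 : ((1:ℝ),(0:ℝ)) ∈ convexHull ℝ ({((0:ℝ),(0:ℝ)), (3,0), (1,1), (0,1)} : Set (ℝ×ℝ)) :=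
      mem_hull_13 h00 h30 (by norm_num [Prod.ext_iff])
    have h20 : ((2:ℝ),(0:ℝ)) ∈ convexHull ℝ ({((0:ℝ),(0:ℝ)), (3,0), (1,1), (0,1)} : Set (ℝ×ℝ)) :=
      mem_hull_13 h30 h00 (by norm_num [Prod.ext_iff])
    simp only [Set.mem_insert_iff, Set.mem_singleton_iff, Prod.mk.injEq] at h
    rcases h with ⟨rfl,rfl⟩|⟨rfl,rfl⟩|⟨rfl,rfl⟩|⟨rfl,rfl⟩|⟨rfl,rfl⟩|⟨rfl,rfl⟩ <;>
      simpa [toRealPt] using ‹_›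

variable {F : Type} [Field F]

/-- The codeword of `C_{P₆⁽³⁾}` with coefficient vector `a`. -/
def cw (a : Fin 6 → F) : (Fˣ × Fˣ) → F := fun t =>
  a 0 + a 1 * (t.1 : F) + a 2 * (t.1 : F)^2 + a 3 * (t.1 : F)^3
    + (t.2 : F) * (a 4 + a 5 * (t.1 : F))

def mons : Fin 6 → (ℤ × ℤ) := ![(0,0),(1,0),(2,0),(3,0),(0,1),(1,1)]

lemma range_mons : Set.range mons = ({(0,0),(1,0),(2,0),(3,0),(0,1),(1,1)} : Set (ℤ × ℤ)) := by
  show Set.range ![((0:ℤ),(0:ℤ)),(1,0),(2,0),(3,0),(0,1),(1,1)] = _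
  rw [Matrix.range_cons, Matrix.range_cons, Matrix.range_cons, Matrix.range_cons,
    Matrix.range_cons, Matrix.range_cons_empty]
  ext p
  simp only [Set.union_def, Set.mem_setOf_eq, Set.mem_singleton_iff, Set.mem_insert_iff]

lemma sum_cw (a : Fin 6 → F) : (∑ i, a i • (evalMonomial (mons i) : (Fˣ×Fˣ) → F)) = cw a := by
  have h0 : mons 0 = (0,0) := rfl
  have h1 : mons 1 = (1,0) := rfl
  have h2 : mons 2 = (2,0) := rfl
  have h3 : mons 3 = (3,0) := rfl
  have h4 : mons 4 = (0,1) := rfl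
  have h5 : mons 5 = (1,1) := rfl
  funext t
  simp only [Fin.sum_univ_six, h0, h1, h2, h3, h4, h5, Pi.add_apply, Pi.smul_apply,
    smul_eq_mul, evalMonomial, cw]
  push_cast
  simp only [zpow_zero, zpow_one, show (2:ℤ)=((2:ℕ):ℤ) from rfl, show (3:ℤ)=((3:ℕ):ℤ) from rfl,
    zpow_natCast]
  ring

lemma mem_code_iff (c : (Fˣ × Fˣ) → F) :
    c ∈ toricCode F ({(0,0),(1,0),(2,0),(3,0),(0,1),(1,1)} : Set (ℤ × ℤ)) ↔
      ∃ a : Fin 6 → F, c = cw a := by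
  have himg : (fun m => (evalMonomial m : (Fˣ×Fˣ) → F)) ''
      ({(0,0),(1,0),(2,0),(3,0),(0,1),(1,1)} : Set (ℤ × ℤ))
      = Set.range (fun i => (evalMonomial (mons i) : (Fˣ×Fˣ) → F)) := by
    rw [← range_mons, ← Set.range_comp]; rfl
  rw [toricCode, himg, Submodule.mem_span_range_iff_exists_fun]
  constructor
  · rintro ⟨a, rfl⟩; exact ⟨a, sum_cw a⟩
  · rintro ⟨a, rfl⟩; exact ⟨a, sum_cw a⟩

lemma card_filter_prod {α β : Type*} [Fintype α] [Fintype β] [DecidableEq α]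
    (P : α × β → Prop) [DecidablePred P] :
    (Finset.univ.filter P).card = ∑ x : α, (Finset.univ.filter fun y => P (x, y)).card := by
  rw [Finset.card_eq_sum_card_fiberwise (f := Prod.fst) (t := Finset.univ)
    (fun t _ => Finset.mem_univ _)]
  refine Finset.sum_congr rfl fun x _ => ?_
  refine Finset.card_bij' (fun t _ => t.2) (fun y _ => (x, y)) ?_ ?_ ?_ ?_
  · rintro ⟨u, v⟩ ht
    simp only [Finset.mem_filter, Finset.mem_univ, true_and] at ht ⊢
    obtain ⟨h1, h2⟩ := ht
    subst h2
    exact h1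
  · intro y hy
    simp only [Finset.mem_filter, Finset.mem_univ, true_and] at hy ⊢
    exact ⟨hy, trivial⟩
  · rintro ⟨u, v⟩ ht
    simp only [Finset.mem_filter] at ht
    simp [← ht.2]
  · intro y hy
    rfl

lemma hammingWt_eq {X G : Type*} [Fintype X] [Zero G] (c : X → G)
    [DecidablePred fun x => c x ≠ 0] :
    hammingWt c = (Finset.univ.filter fun x => c x ≠ 0).card := by
  rw [hammingWt, Set.ncard_eq_toFinset_card']
  simp [Set.toFinset_setOf]

variable [Fintype F] [DecidableEq F]

lemma cubic_roots_le (a0 a1 a2 a3 : F) (h : ¬(a0 = 0 ∧ a1 = 0 ∧ a2 = 0 ∧ a3 = 0)) :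
    (Finset.univ.filter fun x : Fˣ =>
      a0 + a1*(x:F) + a2*(x:F)^2 + a3*(x:F)^3 = 0).card ≤ 3 := by
  set p : F[X] := C a0 + C a1 * X + C a2 * X^2 + C a3 * X^3 with hp
  have hc0 : p.coeff 0 = a0 := by simp [hp, coeff_add]
  have hc1 : p.coeff 1 = a1 := by simp [hp, coeff_add, coeff_X_pow]
  have hc2 : p.coeff 2 = a2 := by simp [hp, coeff_add, coeff_X_pow, coeff_X]
  have hc3 : p.coeff 3 = a3 := by simp [hp, coeff_add, coeff_X_pow, coeff_X]
  have hpne : p ≠ 0 := by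
    intro h0
    rw [h0] at hc0 hc1 hc2 hc3
    simp at hc0 hc1 hc2 hc3
    exact h ⟨hc0.symm, hc1.symm, hc2.symm, hc3.symm⟩
  have hdeg : p.natDegree ≤ 3 := by
    rw [hp]; compute_degree
  calc (Finset.univ.filter fun x : Fˣ =>
      a0 + a1*(x:F) + a2*(x:F)^2 + a3*(x:F)^3 = 0).card
      ≤ p.roots.toFinset.card := by
        refine Finset.card_le_card_of_injOn (fun x : Fˣ => (x : F)) ?_ ?_
        · intro x hx
          simp only [Finset.mem_coe, Finset.mem_filter, Finset.mem_univ, true_and] at hx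
          rw [Finset.mem_coe, Multiset.mem_toFinset, mem_roots hpne]
          simp [IsRoot, hp, eval_add, eval_mul, eval_pow]
          linear_combination hx
        · intro x _ y _ hxy
          exact Units.ext hxy
    _ ≤ Multiset.card p.roots := Multiset.toFinset_card_le _
    _ ≤ p.natDegree := Polynomial.card_roots' p
    _ ≤ 3 := hdeg

lemma linear_roots_le (a4 a5 : F) (h : ¬(a4 = 0 ∧ a5 = 0)) :
    (Finset.univ.filter fun x : Fˣ => a4 + a5*(x:F) = 0).card ≤ 1 := by
  set p : F[X] := C a4 + C a5 * X with hp
  have hc0 : p.coeff 0 = a4 := by simp [hp]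
  have hc1 : p.coeff 1 = a5 := by simp [hp]
  have hpne : p ≠ 0 := by
    intro h0
    rw [h0] at hc0 hc1
    simp at hc0 hc1
    exact h ⟨hc0.symm, hc1.symm⟩
  have hdeg : p.natDegree ≤ 1 := by
    rw [hp]; compute_degree
  calc (Finset.univ.filter fun x : Fˣ => a4 + a5*(x:F) = 0).card
      ≤ p.roots.toFinset.card := by
        refine Finset.card_le_card_of_injOn (fun x : Fˣ => (x : F)) ?_ ?_
        · intro x hx
          simp only [Finset.mem_coe, Finset.mem_filter, Finset.mem_univ, true_and] at hx
          rw [Finset.mem_coe, Multiset.mem_toFinset, mem_roots hpne]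
          simp [IsRoot, hp]
          linear_combination hx
        · intro x _ y _ hxy
          exact Units.ext hxy
    _ ≤ Multiset.card p.roots := Multiset.toFinset_card_le _
    _ ≤ p.natDegree := Polynomial.card_roots' p
    _ ≤ 1 := hdeg

lemma row_zero_le_one (g h : F) (hh : h ≠ 0) :
    (Finset.univ.filter fun y : Fˣ => g + (y:F) * h = 0).card ≤ 1 := by
  apply Finset.card_le_one.2
  intro y1 h1 y2 h2
  simp only [Finset.mem_filter, Finset.mem_univ, true_and] at h1 h2
  apply Units.ext
  have : (y1:F) * h = (y2:F) * h := by linear_combination h1 - h2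
  exact mul_right_cancel₀ hh this

end Aux

/-- for every prime power `q ≥ 5`, the minimum distance of `C_{P₆⁽³⁾}`
over `𝔽_q` equals `(q-1)² − 3(q-1)`. -/
theorem minDist_P6_3 (q : ℕ) (hq : IsPrimePow q) (hq5 : 5 ≤ q)
    (F : Type) [Field F] [Fintype F] (hF : Fintype.card F = q) :
    (minDist (toricCode F (latticePts (P6 3))) : ℤ)
      = ((q:ℤ) - 1)^2 - 3 * ((q:ℤ) - 1) := by
  classical
  have hn : Fintype.card Fˣ = q - 1 := by rw [Fintype.card_units, hF]
  set n := Fintype.card Fˣ with hndef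
  have hn4 : 4 ≤ n := by omega
  have hcode : ∀ c : (Fˣ×Fˣ) → F,
      c ∈ toricCode F (latticePts (P6 3)) ↔ ∃ a : Fin 6 → F, c = cw a := by
    intro c; rw [latticePts_P6_3]; exact mem_code_iff c
  have wt_rows : ∀ c : (Fˣ×Fˣ) → F,
      hammingWt c = ∑ x : Fˣ, (Finset.univ.filter fun y : Fˣ => c (x,y) ≠ 0).card := by
    intro c
    rw [hammingWt_eq, card_filter_prod (fun t : Fˣ × Fˣ => c t ≠ 0)]
  -- The set of weights of nonzero codewords
  set D := {w | ∃ c ∈ toricCode F (latticePts (P6 3)), c ≠ 0 ∧ hammingWt c = w} with hD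
  -- Lower bound
  have hlow : ∀ w ∈ D, (n-3)*n ≤ w := by
    rintro w ⟨c, hc, hc0, rfl⟩
    obtain ⟨a, rfl⟩ := (hcode c).1 hc
    rw [wt_rows]
    by_cases h45 : a 4 = 0 ∧ a 5 = 0
    · have hG : ¬(a 0 = 0 ∧ a 1 = 0 ∧ a 2 = 0 ∧ a 3 = 0) := by
        rintro ⟨h0,h1,h2,h3⟩
        apply hc0
        funext t
        simp [cw, h0, h1, h2, h3, h45.1, h45.2]
      set B := Finset.univ.filter
        (fun x : Fˣ => a 0 + a 1*(x:F) + a 2*(x:F)^2 + a 3*(x:F)^3 = 0) with hBdef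
      have hB : B.card ≤ 3 := cubic_roots_le _ _ _ _ hG
      have hrow : ∀ x ∈ Bᶜ, (Finset.univ.filter fun y : Fˣ => cw a (x,y) ≠ 0).card = n := by
        intro x hx
        rw [Finset.mem_compl, hBdef, Finset.mem_filter] at hx
        push_neg at hx
        have hx' := hx (Finset.mem_univ x)
        have : (Finset.univ.filter fun y : Fˣ => cw a (x,y) ≠ 0) = Finset.univ := by
          apply Finset.filter_true_of_mem
          intro y _
          simp only [cw, h45.1, h45.2]
          simpa using hx'
        rw [this, Finset.card_univ]
      calc (n-3)*n ≤ (n - B.card)*n := by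
            apply Nat.mul_le_mul_right; omega
        _ = Bᶜ.card * n := by rw [Finset.card_compl, ← hndef]
        _ = ∑ _x ∈ Bᶜ, n := by rw [Finset.sum_const, smul_eq_mul]
        _ = ∑ x ∈ Bᶜ, (Finset.univ.filter fun y : Fˣ => cw a (x,y) ≠ 0).card :=
            (Finset.sum_congr rfl hrow).symm
        _ ≤ ∑ x : Fˣ, (Finset.univ.filter fun y : Fˣ => cw a (x,y) ≠ 0).card :=
            Finset.sum_le_sum_of_subset (Finset.subset_univ _)
    · set R := Finset.univ.filter (fun x : Fˣ => a 4 + a 5*(x:F) = 0) with hRdef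
      have hR : R.card ≤ 1 := linear_roots_le _ _ h45
      have hrow : ∀ x ∈ Rᶜ, n - 1 ≤ (Finset.univ.filter fun y : Fˣ => cw a (x,y) ≠ 0).card := by
        intro x hx
        rw [Finset.mem_compl, hRdef, Finset.mem_filter] at hx
        push_neg at hx
        have hx' := hx (Finset.mem_univ x)
        have hz : (Finset.univ.filter fun y : Fˣ => cw a (x,y) = 0).card ≤ 1 := by
          have h1 := row_zero_le_one
            (a 0 + a 1*(x:F) + a 2*(x:F)^2 + a 3*(x:F)^3) (a 4 + a 5*(x:F)) hx'
          have : (Finset.univ.filter fun y : Fˣ => cw a (x,y) = 0)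
              = (Finset.univ.filter fun y : Fˣ =>
                  a 0 + a 1*(x:F) + a 2*(x:F)^2 + a 3*(x:F)^3 + (y:F) * (a 4 + a 5*(x:F)) = 0) := by
            apply Finset.filter_congr
            intro y _
            simp [cw]
          rw [this]
          exact h1
        have hsplit := Finset.card_filter_add_card_filter_not
          (s := Finset.univ) (p := fun y : Fˣ => cw a (x,y) = 0)
        rw [Finset.card_univ] at hsplit
        have : (Finset.univ.filter fun y : Fˣ => ¬ (cw a (x,y) = 0)).card
            = (Finset.univ.filter fun y : Fˣ => cw a (x,y) ≠ 0).card := rfl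
        omega
      have key : ∀ k : ℕ, 4 ≤ k → (k-3)*k ≤ (k-1)*(k-1) := by
        intro k hk
        obtain ⟨m, rfl⟩ := Nat.exists_eq_add_of_le hk
        simp only [show 4 + m - 3 = m + 1 by omega, show 4 + m - 1 = m + 3 by omega]
        nlinarith
      calc (n-3)*n ≤ (n-1)*(n-1) := key n hn4
        _ ≤ (n - R.card)*(n-1) := by apply Nat.mul_le_mul_right; omega
        _ = ∑ _x ∈ Rᶜ, (n-1) := by
            rw [Finset.sum_const, smul_eq_mul, Finset.card_compl, ← hndef]
        _ ≤ ∑ x ∈ Rᶜ, (Finset.univ.filter fun y : Fˣ => cw a (x,y) ≠ 0).card :=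
            Finset.sum_le_sum hrow
        _ ≤ ∑ x : Fˣ, (Finset.univ.filter fun y : Fˣ => cw a (x,y) ≠ 0).card :=
            Finset.sum_le_sum_of_subset (Finset.subset_univ _)
  -- Upper bound: construct a codeword of weight (n-3)*n
  obtain ⟨s, hsub, hs3⟩ := Finset.exists_subset_card_eq (s := (Finset.univ : Finset Fˣ)) (n := 3)
    (by rw [Finset.card_univ]; omega)
  obtain ⟨r1, r2, r3, h12, h13, h23, rfl⟩ := Finset.card_eq_three.1 hs3
  set a : Fin 6 → F :=
    ![-((r1:F)*(r2:F)*(r3:F)), (r1:F)*(r2:F) + (r1:F)*(r3:F) + (r2:F)*(r3:F),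
      -((r1:F) + (r2:F) + (r3:F)), 1, 0, 0] with hadef
  have ha0 : a 0 = -((r1:F)*(r2:F)*(r3:F)) := rfl
  have ha1 : a 1 = (r1:F)*(r2:F) + (r1:F)*(r3:F) + (r2:F)*(r3:F) := rfl
  have ha2 : a 2 = -((r1:F) + (r2:F) + (r3:F)) := rfl
  have ha3 : a 3 = 1 := rfl
  have ha4 : a 4 = 0 := rfl
  have ha5 : a 5 = 0 := rfl
  have hfact : ∀ t : Fˣ × Fˣ,
      cw a t = ((t.1:F) - r1) * ((t.1:F) - r2) * ((t.1:F) - r3) := by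
    intro t
    simp only [cw, ha0, ha1, ha2, ha3, ha4, ha5]
    ring
  have hzero_iff : ∀ x : Fˣ, ((x:F) - r1) * ((x:F) - r2) * ((x:F) - r3) = 0 ↔
      x ∈ ({r1, r2, r3} : Finset Fˣ) := by
    intro x
    rw [mul_eq_zero, mul_eq_zero, sub_eq_zero, sub_eq_zero, sub_eq_zero]
    simp only [Finset.mem_insert, Finset.mem_singleton]
    constructor
    · rintro ((h|h)|h)
      · exact Or.inl (Units.ext h)
      · exact Or.inr (Or.inl (Units.ext h))
      · exact Or.inr (Or.inr (Units.ext h))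
    · rintro (rfl|rfl|rfl)
      · exact Or.inl (Or.inl rfl)
      · exact Or.inl (Or.inr rfl)
      · exact Or.inr rfl
  have hcmem : cw a ∈ toricCode F (latticePts (P6 3)) := (hcode (cw a)).2 ⟨a, rfl⟩
  have hcompl : (({r1, r2, r3} : Finset Fˣ)ᶜ).Nonempty := by
    rw [← Finset.card_pos, Finset.card_compl, hs3, ← hndef]
    omega
  obtain ⟨x0, hx0⟩ := hcompl
  have hcne : cw a ≠ 0 := by
    intro h0
    have : cw a (x0, 1) = 0 := by rw [h0]; rfl
    rw [hfact, hzero_iff] at this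
    rw [Finset.mem_compl] at hx0
    exact hx0 this
  have hwt : hammingWt (cw a) = (n-3)*n := by
    rw [wt_rows]
    have hrow : ∀ x : Fˣ, (Finset.univ.filter fun y : Fˣ => cw a (x,y) ≠ 0).card
        = if x ∈ ({r1, r2, r3} : Finset Fˣ) then 0 else n := by
      intro x
      by_cases hx : x ∈ ({r1, r2, r3} : Finset Fˣ)
      · rw [if_pos hx]
        rw [Finset.card_eq_zero, Finset.filter_eq_empty_iff]
        intro y _
        simp only [ne_eq, not_not]
        rw [hfact]
        exact (hzero_iff x).2 hx
      · rw [if_neg hx]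
        have : (Finset.univ.filter fun y : Fˣ => cw a (x,y) ≠ 0) = Finset.univ := by
          apply Finset.filter_true_of_mem
          intro y _
          rw [hfact]
          intro hcontra
          exact hx ((hzero_iff x).1 hcontra)
        rw [this, Finset.card_univ]
    rw [Finset.sum_congr rfl (fun x _ => hrow x), Finset.sum_ite, Finset.sum_const_zero,
      Finset.sum_const, smul_eq_mul, zero_add]
    have hceq : (Finset.univ.filter fun x : Fˣ => ¬ x ∈ ({r1, r2, r3} : Finset Fˣ)) =
        ({r1, r2, r3} : Finset Fˣ)ᶜ := by
      ext x; simp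
    rw [hceq, Finset.card_compl, hs3, ← hndef]
  have hmem : (n-3)*n ∈ D := ⟨cw a, hcmem, hcne, hwt⟩
  have hmin : minDist (toricCode F (latticePts (P6 3))) = (n-3)*n := by
    rw [minDist]
    exact le_antisymm (Nat.sInf_le hmem) (le_csInf ⟨_, hmem⟩ hlow)
  rw [hmin]
  have hnz : (n:ℤ) = (q:ℤ) - 1 := by omega
  have h3n : 3 ≤ n := by omega
  rw [Nat.cast_mul, Nat.cast_sub h3n, hnz]
  ring
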